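/- Work in the coordinate model with smooth Hamiltonian H(x^i,u^α,p^i_α) and Ω_h = dH∧d_mx − dp^i_α∧du^α∧(∂_i⌟d_mx). A smooth section φ(x) = (x^i, φ^α(x), φ^i_α(x)) of J¹π* → ℝ^m satisfies φ*(ι_X Ω_h) = 0 for every smooth vector field X on J¹π* if and only if φ satisfies the Hamilton–De Donder–Weyl equations: ∂φ^α/∂x^i = (∂H/∂p^i_α)∘φ for all i, α, and Σ_i ∂φ^i_α/∂x^i = −(∂H/∂u^α)∘φ for all α. -/

import Mathlib

open scoped BigOperators

noncomputable section

/-- A raw `k`-cochain on `E`: a scalar function of a point and `k` tangent vectors.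
Smooth differential `k`-forms are regarded as such cochains by evaluation. -/
abbrev Coch (E : Type) (k : ℕ) : Type := E → (Fin k → E) → ℝ

/-- The (componentwise) exterior derivative of a `k`-cochain:
`(dω)(x)(v₀,…,v_k) = ∑ⱼ (-1)ʲ ∂_{vⱼ}(y ↦ ω(y)(v₀,…,v̂ⱼ,…,v_k))(x)`. -/
noncomputable def extDer {E : Type} [NormedAddCommGroup E] [NormedSpace ℝ E] {k : ℕ}
    (ω : Coch E k) : Coch E (k + 1) := fun x v =>
  ∑ j : Fin (k + 1),
    (-1 : ℝ) ^ (j : ℕ) * fderiv ℝ (fun y => ω y (v ∘ j.succAbove)) x (v j)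

/-- Wedge product of a 1-cochain with a `k`-cochain:
`(θ∧ω)(x)(v₀,…,v_k) = ∑ⱼ (-1)ʲ θ(x)(vⱼ) ω(x)(v₀,…,v̂ⱼ,…,v_k)`. -/
def wedge1 {E : Type} {k : ℕ} (θ : Coch E 1) (ω : Coch E k) : Coch E (k + 1) := fun x v =>
  ∑ j : Fin (k + 1), (-1 : ℝ) ^ (j : ℕ) * θ x (fun _ => v j) * ω x (v ∘ j.succAbove)

/-- Interior product (contraction) of a cochain with a vector field. -/
def iotaV {E : Type} {k : ℕ} (X : E → E) (ω : Coch E (k + 1)) : Coch E k := fun x v =>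
  ω x (Fin.cons (X x) v)

/-- Pullback of a cochain along a (smooth) map. -/
noncomputable def pullC {E F : Type} [NormedAddCommGroup E] [NormedSpace ℝ E]
    [NormedAddCommGroup F] [NormedSpace ℝ F] {k : ℕ}
    (f : F → E) (ω : Coch E k) : Coch F k := fun x v =>
  ω (f x) fun a => fderiv ℝ f x (v a)

/-- The differential of a function, as a 1-cochain. -/
noncomputable def dFun {E : Type} [NormedAddCommGroup E] [NormedSpace ℝ E]
    (H : E → ℝ) : Coch E 1 := fun q v => fderiv ℝ H q (v 0)

/-! ## The coordinate model of first-order Hamiltonian field theory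

The base is `ℝ^m` with coordinates `xⁱ`, the configuration bundle is `E = ℝ^m × ℝ^N` with
fibre coordinates `u^α`, and the reduced multimomentum bundle is
`J¹π* = ℝ^m × ℝ^N × ℝ^{mN}` with coordinates `(xⁱ, u^α, pⁱ_α)`. -/

/-- `J¹π* = ℝ^m × ℝ^N × ℝ^{mN}` in coordinates `(xⁱ, u^α, pⁱ_α)`. -/
abbrev Jb (m N : ℕ) : Type := (Fin m → ℝ) × (Fin N → ℝ) × (Fin m → Fin N → ℝ)

/-- The coordinate volume form `d_mx = dx¹∧⋯∧dx^m` on `J¹π*`. -/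
def dmxJ (m N : ℕ) : Coch (Jb m N) m := fun _ v => Matrix.det (Matrix.of fun a b => (v b).1 a)

/-- The coordinate 1-form `du^α` on `J¹π*`. -/
def duJ (m N : ℕ) (α : Fin N) : Coch (Jb m N) 1 := fun _ v => (v 0).2.1 α

/-- The coordinate 1-form `dpⁱ_α` on `J¹π*`. -/
def dpJ (m N : ℕ) (i : Fin m) (α : Fin N) : Coch (Jb m N) 1 := fun _ v => (v 0).2.2 i α

/-- The coordinate vector `∂/∂xⁱ` on `J¹π*`. -/
def XdirJ (m N : ℕ) (i : Fin m) : Jb m N := (Pi.single i 1, 0, 0)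

/-- The coordinate vector `∂/∂u^α` on `J¹π*`. -/
def UdirJ (m N : ℕ) (α : Fin N) : Jb m N := (0, Pi.single α 1, 0)

/-- The coordinate vector `∂/∂pⁱ_α` on `J¹π*`. -/
def PdirJ (m N : ℕ) (i : Fin m) (α : Fin N) : Jb m N := (0, 0, Pi.single i (Pi.single α 1))

/-- The `m`-form `du^α ∧ (∂_i ⌟ d_mx) = -(∂_i ⌟ (du^α ∧ d_mx))` on `J¹π*`. -/
def duContr (m N : ℕ) (α : Fin N) (i : Fin m) : Coch (Jb m N) m := fun q v =>
  -(iotaV (fun _ => XdirJ m N i) (wedge1 (duJ m N α) (dmxJ m N)) q v)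

/-- The Hamiltonian `(m+1)`-form `Ω_h = dH∧d_mx − dpⁱ_α∧du^α∧(∂_i⌟d_mx)` on `J¹π*`. -/
noncomputable def OmegaH (m N : ℕ) (H : Jb m N → ℝ) : Coch (Jb m N) (m + 1) := fun q v =>
  wedge1 (dFun H) (dmxJ m N) q v -
    ∑ i : Fin m, ∑ α : Fin N, wedge1 (dpJ m N i α) (duContr m N α i) q v

/-- The `m`-form `Θ_h = −H d_mx + pⁱ_α du^α∧(∂_i⌟d_mx)` on `J¹π*`. -/
noncomputable def ThetaHc (m N : ℕ) (H : Jb m N → ℝ) : Coch (Jb m N) m := fun q v =>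
  -(H q) * dmxJ m N q v + ∑ i : Fin m, ∑ α : Fin N, q.2.2 i α * duContr m N α i q v

/-- The pullback to `J¹π*` of the 1-form `ϑ = ϑ_i(x) dxⁱ` on the base. -/
def thJ (m N : ℕ) (ϑ : (Fin m → ℝ) → Fin m → ℝ) : Coch (Jb m N) 1 := fun q v =>
  ∑ i : Fin m, ϑ q.1 i * (v 0).1 i

/-- The locally conformal Hamiltonian `(m+1)`-form `(Ω_θ)_h = Ω_h + θ∧Θ_h` on `J¹π*`. -/
noncomputable def OmegaThH (m N : ℕ) (H : Jb m N → ℝ) (ϑ : (Fin m → ℝ) → Fin m → ℝ) :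
    Coch (Jb m N) (m + 1) := fun q v =>
  OmegaH m N H q v + wedge1 (thJ m N ϑ) (ThetaHc m N H) q v

/-- The section `φ(x) = (x, φ^α(x), φⁱ_α(x))` of `J¹π* → ℝ^m`. -/
def secJ (m N : ℕ) (φ : (Fin m → ℝ) → Fin N → ℝ) (P : (Fin m → ℝ) → Fin m → Fin N → ℝ) :
    (Fin m → ℝ) → Jb m N := fun x => (x, φ x, P x)

/-- Closedness of the 1-form `ϑ_i(x) dxⁱ` on `ℝ^m`, in coordinates. -/
def ClosedOneForm (m : ℕ) (ϑ : (Fin m → ℝ) → Fin m → ℝ) : Prop :=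
  ∀ (x : Fin m → ℝ) (i j : Fin m),
    fderiv ℝ (fun y => ϑ y i) x (Pi.single j 1) = fderiv ℝ (fun y => ϑ y j) x (Pi.single i 1)

/-- The Hamilton–De Donder–Weyl equations in coordinates:
`∂φ^α/∂xⁱ = ∂H/∂pⁱ_α ∘ φ` and `∑ᵢ ∂φⁱ_α/∂xⁱ = −∂H/∂u^α ∘ φ`. -/
def HDWeq (m N : ℕ) (H : Jb m N → ℝ) (φ : (Fin m → ℝ) → Fin N → ℝ)
    (P : (Fin m → ℝ) → Fin m → Fin N → ℝ) : Prop :=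
  (∀ (x : Fin m → ℝ) (i : Fin m) (α : Fin N),
      fderiv ℝ φ x (Pi.single i 1) α = fderiv ℝ H (secJ m N φ P x) (PdirJ m N i α)) ∧
  (∀ (x : Fin m → ℝ) (α : Fin N),
      (∑ i : Fin m, fderiv ℝ P x (Pi.single i 1) i α) =
        -(fderiv ℝ H (secJ m N φ P x) (UdirJ m N α)))

/-- The locally conformal Hamilton–De Donder–Weyl equations in coordinates:
`∂φ^α/∂xⁱ = ∂H/∂pⁱ_α ∘ φ` and `∑ᵢ ∂φⁱ_α/∂xⁱ = −∂H/∂u^α ∘ φ + ϑ_i φⁱ_α`. -/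
def lcHDWeq (m N : ℕ) (H : Jb m N → ℝ) (ϑ : (Fin m → ℝ) → Fin m → ℝ)
    (φ : (Fin m → ℝ) → Fin N → ℝ) (P : (Fin m → ℝ) → Fin m → Fin N → ℝ) : Prop :=
  (∀ (x : Fin m → ℝ) (i : Fin m) (α : Fin N),
      fderiv ℝ φ x (Pi.single i 1) α = fderiv ℝ H (secJ m N φ P x) (PdirJ m N i α)) ∧
  (∀ (x : Fin m → ℝ) (α : Fin N),
      (∑ i : Fin m, fderiv ℝ P x (Pi.single i 1) i α) =
        -(fderiv ℝ H (secJ m N φ P x) (UdirJ m N α)) + ∑ i : Fin m, ϑ x i * P x i α)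


/-! ## Auxiliary machinery for the Hamilton–De Donder–Weyl theorem -/

namespace HDWaux

theorem alt_sum_apply {M : Type} [AddCommGroup M] [Module ℝ M] {k : ℕ} {α : Type}
    (s : Finset α) (f : α → (M [⋀^Fin k]→ₗ[ℝ] ℝ)) (v : Fin k → M) :
    (∑ a ∈ s, f a) v = ∑ a ∈ s, f a v := by
  classical
  induction s using Finset.induction_on with
  | empty => simp
  | insert a s h ih => rw [Finset.sum_insert h, Finset.sum_insert h, AlternatingMap.add_apply, ih]

variable (m N : ℕ)

/-- The linear map whose determinant expansion gives `dH ∧ d_mx`. -/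
def L1 (H : Jb m N → ℝ) (q : Jb m N) : Jb m N →ₗ[ℝ] (Fin (m + 1) → ℝ) where
  toFun ξ := Fin.cons (fderiv ℝ H q ξ) ξ.1
  map_add' a b := by
    funext j
    refine Fin.cases ?_ (fun s => ?_) j <;> simp
  map_smul' c a := by
    funext j
    refine Fin.cases ?_ (fun s => ?_) j <;> simp

/-- The linear map whose determinant expansion gives `dpⁱ_α ∧ du^α ∧ (∂ᵢ⌟d_mx)`. -/
def L2 (i : Fin m) (α : Fin N) : Jb m N →ₗ[ℝ] (Fin (m + 2) → ℝ) where
  toFun ξ := Fin.cons (ξ.2.2 i α) (Fin.cons (ξ.2.1 α) ξ.1)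
  map_add' a b := by
    funext j
    refine Fin.cases ?_ (fun s => Fin.cases ?_ (fun t => ?_) s) j <;> simp
  map_smul' c a := by
    funext j
    refine Fin.cases ?_ (fun s => Fin.cases ?_ (fun t => ?_) s) j <;> simp

/-- The constant extra column corresponding to `∂/∂xⁱ`. -/
def cvec (i : Fin m) : Fin (m + 2) → ℝ := Fin.cons 0 (Fin.cons 0 (Pi.single i 1))

/-- The determinant alternating map on `ℝ^n`. -/
def bdet (n : ℕ) : (Fin n → ℝ) [⋀^Fin n]→ₗ[ℝ] ℝ := (Pi.basisFun ℝ (Fin n)).det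

theorem bdet_apply (n : ℕ) (z : Fin n → Fin n → ℝ) :
    bdet n z = Matrix.det (Matrix.of fun (r c : Fin n) => z c r) := by
  rw [bdet, Module.Basis.det_apply]
  congr 1

/-- `Ω_h` at the point `q`, as an honest alternating map. -/
def AOm (H : Jb m N → ℝ) (q : Jb m N) : (Jb m N) [⋀^Fin (m + 1)]→ₗ[ℝ] ℝ :=
  (bdet (m + 1)).compLinearMap (L1 m N H q) -
    ∑ i : Fin m, ∑ α : Fin N,
      ((bdet (m + 2)).curryLeft (cvec m i)).compLinearMap (L2 m N i α)

theorem AOm_apply (H : Jb m N → ℝ) (q : Jb m N) (v : Fin (m + 1) → Jb m N) :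
    AOm m N H q v = bdet (m + 1) (fun j => L1 m N H q (v j)) -
      ∑ i : Fin m, ∑ α : Fin N,
        bdet (m + 2) (Fin.cons (cvec m i) fun j => L2 m N i α (v j)) := by
  unfold AOm
  rw [AlternatingMap.sub_apply, AlternatingMap.compLinearMap_apply, alt_sum_apply]
  congr 1
  refine Finset.sum_congr rfl fun i _ => ?_
  rw [alt_sum_apply]
  refine Finset.sum_congr rfl fun α _ => ?_
  rw [AlternatingMap.compLinearMap_apply, AlternatingMap.curryLeft_apply_apply]
  rfl

theorem wedge1_dmx (θ : Coch (Jb m N) 1) (q : Jb m N) (z : Fin (m + 1) → Jb m N) :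
    wedge1 θ (dmxJ m N) q z =
      Matrix.det (Matrix.of fun (r c : Fin (m + 1)) =>
        (Fin.cons (θ q fun _ => z c) (z c).1 : Fin (m + 1) → ℝ) r) := by
  rw [Matrix.det_succ_row_zero]
  unfold wedge1 dmxJ
  refine Finset.sum_congr rfl fun j _ => ?_
  have h1 : (Matrix.of fun (r c : Fin (m + 1)) =>
      (Fin.cons (θ q fun _ => z c) (z c).1 : Fin (m + 1) → ℝ) r) 0 j = θ q fun _ => z j := by
    simp
  have h2 : (Matrix.of fun (a b : Fin m) => ((z ∘ j.succAbove) b).1 a) =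
      (Matrix.of fun (r c : Fin (m + 1)) =>
        (Fin.cons (θ q fun _ => z c) (z c).1 : Fin (m + 1) → ℝ) r).submatrix
        Fin.succ j.succAbove := by
    ext a b
    simp [Matrix.submatrix_apply, Function.comp]
  rw [h1, h2]

theorem claimA (H : Jb m N → ℝ) (q : Jb m N) (v : Fin (m + 1) → Jb m N) :
    wedge1 (dFun H) (dmxJ m N) q v = bdet (m + 1) fun j => L1 m N H q (v j) := by
  rw [wedge1_dmx, bdet_apply]
  rfl

theorem claimB (i : Fin m) (α : Fin N) (q : Jb m N) (v : Fin (m + 1) → Jb m N) :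
    wedge1 (dpJ m N i α) (duContr m N α i) q v =
      bdet (m + 2) (Fin.cons (cvec m i) fun j => L2 m N i α (v j)) := by
  rw [bdet_apply, Matrix.det_succ_row_zero, Fin.sum_univ_succ]
  have h0 : (Matrix.of fun (r c : Fin (m + 2)) =>
      (Fin.cons (cvec m i) (fun j => L2 m N i α (v j)) : Fin (m + 2) → Fin (m + 2) → ℝ) c r)
      0 (0 : Fin (m + 2)) = 0 := by
    simp [cvec]
  rw [h0]
  simp only [mul_zero, zero_mul, zero_add]
  unfold wedge1
  refine Finset.sum_congr rfl fun j _ => ?_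
  have hM : (Matrix.of fun (r c : Fin (m + 2)) =>
      (Fin.cons (cvec m i) (fun j => L2 m N i α (v j)) : Fin (m + 2) → Fin (m + 2) → ℝ) c r)
      0 j.succ = (v j).2.2 i α := by
    simp [L2]
  have hdet : (Matrix.of fun (r c : Fin (m + 2)) =>
      (Fin.cons (cvec m i) (fun j => L2 m N i α (v j)) : Fin (m + 2) → Fin (m + 2) → ℝ) c r).submatrix
        Fin.succ j.succ.succAbove =
      Matrix.of fun (r c : Fin (m + 1)) =>
        (Fin.cons (duJ m N α q fun _ => (Fin.cons (XdirJ m N i) (v ∘ j.succAbove) : Fin (m + 1) → Jb m N) c)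
          ((Fin.cons (XdirJ m N i) (v ∘ j.succAbove) : Fin (m + 1) → Jb m N) c).1 : Fin (m + 1) → ℝ) r := by
    ext a b
    refine Fin.cases ?_ (fun b' => ?_) b
    · simp [Matrix.submatrix_apply, Fin.succ_succAbove_zero, cvec, XdirJ, duJ]
    · simp [Matrix.submatrix_apply, Fin.succ_succAbove_succ, L2, duJ, Function.comp]
  rw [hM, hdet]
  simp only [dpJ, duContr, iotaV]
  rw [wedge1_dmx, Fin.val_succ, pow_succ]
  ring

theorem omega_eq (H : Jb m N → ℝ) (q : Jb m N) (v : Fin (m + 1) → Jb m N) :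
    OmegaH m N H q v = AOm m N H q v := by
  rw [AOm_apply]
  unfold OmegaH
  rw [claimA]
  congr 1
  exact Finset.sum_congr rfl fun i _ => Finset.sum_congr rfl fun α _ => claimB m N i α q v

theorem detS {n : ℕ} (i' : Fin (n + 1)) (r : Fin (n + 1) → ℝ)
    (w : Fin (n + 1) → Fin (n + 1) → ℝ) (hw : ∀ b, w b = Pi.single b 1) :
    Matrix.det (Matrix.of fun (a b : Fin (n + 1)) =>
        (Fin.cons (r b) (fun a'' => w b (i'.succAbove a'')) : Fin (n + 1) → ℝ) a) =
      (-1 : ℝ) ^ (i' : ℕ) * r i' := by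
  rw [Matrix.det_succ_row_zero, Finset.sum_eq_single i']
  · have h1 : (Matrix.of fun (a b : Fin (n + 1)) =>
        (Fin.cons (r b) (fun a'' => w b (i'.succAbove a'')) : Fin (n + 1) → ℝ) a).submatrix
          Fin.succ i'.succAbove = 1 := by
      ext a b
      simp [Matrix.submatrix_apply, hw, Pi.single_apply, Matrix.one_apply,
        Fin.succAbove_right_inj]
    rw [h1, Matrix.det_one, Matrix.of_apply, Fin.cons_zero, mul_one]
  · intro b _ hb
    obtain ⟨c, hc⟩ := Fin.exists_succAbove_eq (Ne.symm hb)
    rw [Matrix.det_eq_zero_of_column_eq_zero c ?_, mul_zero]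
    intro a
    simp [Matrix.submatrix_apply, hc, hw, Pi.single_apply, Fin.succAbove_ne]
  · intro h
    exact absurd (Finset.mem_univ i') h

/-- Expansion of the `(n+2) × (n+2)` determinant with one `eᵢ`-like column. -/
theorem detB {n : ℕ} (i' : Fin (n + 1)) (r : Fin (n + 1) → ℝ)
    (w : Fin (n + 1) → Fin (n + 1) → ℝ) (hw : ∀ b, w b = Pi.single b 1) :
    Matrix.det (Matrix.of fun (a b : Fin (n + 2)) =>
      (Fin.cons (Fin.cons (0 : ℝ) (Pi.single i' 1))
        (fun b' => (Fin.cons (r b') (w b') : Fin (n + 2) → ℝ)) : Fin (n + 2) → Fin (n + 2) → ℝ) b a) =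
      -(r i') := by
  rw [Matrix.det_succ_column_zero, Finset.sum_eq_single i'.succ]
  · have h1 : (Matrix.of fun (a b : Fin (n + 2)) =>
        (Fin.cons (Fin.cons (0 : ℝ) (Pi.single i' 1))
          (fun b' => (Fin.cons (r b') (w b') : Fin (n + 2) → ℝ)) : Fin (n + 2) → Fin (n + 2) → ℝ) b a)
        i'.succ 0 = 1 := by
      simp
    have h2 : (Matrix.of fun (a b : Fin (n + 2)) =>
        (Fin.cons (Fin.cons (0 : ℝ) (Pi.single i' 1))
          (fun b' => (Fin.cons (r b') (w b') : Fin (n + 2) → ℝ)) : Fin (n + 2) → Fin (n + 2) → ℝ) b a).submatrix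
          i'.succ.succAbove Fin.succ =
        Matrix.of fun (a b : Fin (n + 1)) =>
          (Fin.cons (r b) (fun a'' => w b (i'.succAbove a'')) : Fin (n + 1) → ℝ) a := by
      ext a b
      refine Fin.cases ?_ (fun a'' => ?_) a
      · simp [Matrix.submatrix_apply]
      · simp [Matrix.submatrix_apply, Fin.succ_succAbove_succ]
    rw [h1, h2, detS i' r w hw, Fin.val_succ, pow_succ]
    have hev : ((-1 : ℝ)) ^ ((i' : ℕ) + (i' : ℕ)) = 1 := Even.neg_one_pow ⟨(i' : ℕ), rfl⟩
    calc (-1 : ℝ) ^ (i' : ℕ) * -1 * 1 * ((-1 : ℝ) ^ (i' : ℕ) * r i')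
        = ((-1 : ℝ) ^ ((i' : ℕ) + (i' : ℕ))) * (-1 * r i') := by rw [pow_add]; ring
      _ = -(r i') := by rw [hev]; ring
  · intro b _ hb
    refine Fin.cases ?_ (fun s hs => ?_) b hb
    · intro _
      simp
    · have hsi : s ≠ i' := fun h => hs (by rw [h])
      simp [Pi.single_apply, hsi]
  · intro h
    exact absurd (Finset.mem_univ i'.succ) h

theorem val1 (H : Jb m N → ℝ) (q : Jb m N) (ξ : Jb m N) (hξ : ξ.1 = 0)
    (W : Fin m → Jb m N) (hW : ∀ b, (W b).1 = Pi.single b 1) :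
    bdet (m + 1) (fun j => L1 m N H q ((Fin.cons ξ W : Fin (m + 1) → Jb m N) j)) =
      fderiv ℝ H q ξ := by
  rw [bdet_apply, Matrix.det_succ_column_zero, Fin.sum_univ_succ]
  have h1 : (Matrix.of fun (r c : Fin (m + 1)) =>
      L1 m N H q ((Fin.cons ξ W : Fin (m + 1) → Jb m N) c) r).submatrix
      (Fin.succAbove 0) Fin.succ = 1 := by
    ext a b
    simp [Matrix.submatrix_apply, L1, hW, Pi.single_apply, Matrix.one_apply]
  have h2 : ∀ s : Fin m, (Matrix.of fun (r c : Fin (m + 1)) =>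
      L1 m N H q ((Fin.cons ξ W : Fin (m + 1) → Jb m N) c) r) s.succ 0 = 0 := fun s => by
    simp [L1, hξ]
  rw [h1, Matrix.det_one]
  simp [h2, L1, hξ]

theorem val2P (i' : Fin m) (α' : Fin N) (ξ : Jb m N) (hξ1 : ξ.1 = 0) (hξ2 : ξ.2.1 = 0)
    (W : Fin m → Jb m N) (hW : ∀ b, (W b).1 = Pi.single b 1) :
    bdet (m + 2) (Fin.cons (cvec m i')
      fun j => L2 m N i' α' ((Fin.cons ξ W : Fin (m + 1) → Jb m N) j)) =
      ξ.2.2 i' α' * (W i').2.1 α' := by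
  obtain ⟨n, rfl⟩ : ∃ n, m = n + 1 := ⟨m - 1, (Nat.succ_pred_eq_of_pos i'.pos).symm⟩
  rw [bdet_apply, Matrix.det_succ_column _ 1, Finset.sum_eq_single (0 : Fin (n + 3))]
  · have h1 : (Matrix.of fun (r c : Fin (n + 3)) =>
        (Fin.cons (cvec (n + 1) i')
          (fun j => L2 (n + 1) N i' α' ((Fin.cons ξ W : Fin (n + 2) → Jb (n + 1) N) j)) :
          Fin (n + 3) → Fin (n + 3) → ℝ) c r) 0 1 = ξ.2.2 i' α' := by
      rw [show (1 : Fin (n + 3)) = (0 : Fin (n + 2)).succ from rfl]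
      simp [L2]
    have h2 : (Matrix.of fun (r c : Fin (n + 3)) =>
        (Fin.cons (cvec (n + 1) i')
          (fun j => L2 (n + 1) N i' α' ((Fin.cons ξ W : Fin (n + 2) → Jb (n + 1) N) j)) :
          Fin (n + 3) → Fin (n + 3) → ℝ) c r).submatrix
          (Fin.succAbove 0) (Fin.succAbove 1) =
        Matrix.of fun (a b : Fin (n + 2)) =>
          (Fin.cons (Fin.cons (0 : ℝ) (Pi.single i' 1))
            (fun b' => (Fin.cons ((W b').2.1 α') ((W b').1) : Fin (n + 2) → ℝ)) :
            Fin (n + 2) → Fin (n + 2) → ℝ) b a := by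
      ext a b
      refine Fin.cases ?_ (fun b' => ?_) b <;>
        simp [Matrix.submatrix_apply, cvec, L2, Fin.one_succAbove_zero, Fin.one_succAbove_succ]
    rw [h1, h2, detB i' (fun b' => (W b').2.1 α') (fun b' => (W b').1) hW]
    norm_num
  · intro b _ hb
    have hz : (Matrix.of fun (r c : Fin (n + 3)) =>
        (Fin.cons (cvec (n + 1) i')
          (fun j => L2 (n + 1) N i' α' ((Fin.cons ξ W : Fin (n + 2) → Jb (n + 1) N) j)) :
          Fin (n + 3) → Fin (n + 3) → ℝ) c r) b 1 = 0 := by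
      rw [show (1 : Fin (n + 3)) = (0 : Fin (n + 2)).succ from rfl]
      rcases Fin.eq_zero_or_eq_succ b with rfl | ⟨s, rfl⟩
      · exact absurd rfl hb
      · refine Fin.cases ?_ (fun t => ?_) s <;> simp [L2, hξ1, hξ2]
    rw [hz]
    ring
  · intro h
    exact absurd (Finset.mem_univ _) h

theorem val2U (i' : Fin m) (α' : Fin N) (ξ : Jb m N) (hξ1 : ξ.1 = 0) (hξ2 : ξ.2.2 = 0)
    (W : Fin m → Jb m N) (hW : ∀ b, (W b).1 = Pi.single b 1) :
    bdet (m + 2) (Fin.cons (cvec m i')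
      fun j => L2 m N i' α' ((Fin.cons ξ W : Fin (m + 1) → Jb m N) j)) =
      -(ξ.2.1 α' * (W i').2.2 i' α') := by
  obtain ⟨n, rfl⟩ : ∃ n, m = n + 1 := ⟨m - 1, (Nat.succ_pred_eq_of_pos i'.pos).symm⟩
  rw [bdet_apply, Matrix.det_succ_column _ 1, Finset.sum_eq_single (1 : Fin (n + 3))]
  · have h1 : (Matrix.of fun (r c : Fin (n + 3)) =>
        (Fin.cons (cvec (n + 1) i')
          (fun j => L2 (n + 1) N i' α' ((Fin.cons ξ W : Fin (n + 2) → Jb (n + 1) N) j)) :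
          Fin (n + 3) → Fin (n + 3) → ℝ) c r) 1 1 = ξ.2.1 α' := by
      rw [show (1 : Fin (n + 3)) = (0 : Fin (n + 2)).succ from rfl]
      simp [L2]
    have h2 : (Matrix.of fun (r c : Fin (n + 3)) =>
        (Fin.cons (cvec (n + 1) i')
          (fun j => L2 (n + 1) N i' α' ((Fin.cons ξ W : Fin (n + 2) → Jb (n + 1) N) j)) :
          Fin (n + 3) → Fin (n + 3) → ℝ) c r).submatrix
          (Fin.succAbove 1) (Fin.succAbove 1) =
        Matrix.of fun (a b : Fin (n + 2)) =>
          (Fin.cons (Fin.cons (0 : ℝ) (Pi.single i' 1))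
            (fun b' => (Fin.cons ((W b').2.2 i' α') ((W b').1) : Fin (n + 2) → ℝ)) :
            Fin (n + 2) → Fin (n + 2) → ℝ) b a := by
      ext a b
      refine Fin.cases ?_ (fun b' => ?_) b <;>
        refine Fin.cases ?_ (fun a' => ?_) a <;>
        simp [Matrix.submatrix_apply, cvec, L2, Fin.one_succAbove_zero, Fin.one_succAbove_succ]
    rw [h1, h2, detB i' (fun b' => (W b').2.2 i' α') (fun b' => (W b').1) hW]
    norm_num
  · intro b _ hb
    have hz : (Matrix.of fun (r c : Fin (n + 3)) =>
        (Fin.cons (cvec (n + 1) i')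
          (fun j => L2 (n + 1) N i' α' ((Fin.cons ξ W : Fin (n + 2) → Jb (n + 1) N) j)) :
          Fin (n + 3) → Fin (n + 3) → ℝ) c r) b 1 = 0 := by
      rw [show (1 : Fin (n + 3)) = (0 : Fin (n + 2)).succ from rfl]
      rcases Fin.eq_zero_or_eq_succ b with rfl | ⟨s, rfl⟩
      · simp [L2, hξ2]
      · rcases Fin.eq_zero_or_eq_succ s with rfl | ⟨t, rfl⟩
        · exact absurd rfl hb
        · simp [L2, hξ1]
    rw [hz]
    ring
  · intro h
    exact absurd (Finset.mem_univ _) h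

theorem sum_single_single (i : Fin m) (α : Fin N) (g : Fin m → Fin N → ℝ) :
    (∑ i' : Fin m, ∑ α' : Fin N,
      (Pi.single i (Pi.single α (1 : ℝ)) : Fin m → Fin N → ℝ) i' α' * g i' α') = g i α := by
  rw [Finset.sum_eq_single i]
  · rw [Finset.sum_eq_single α]
    · simp
    · intro b _ hb
      simp [Pi.single_apply, hb]
    · simp
  · intro b _ hb
    simp [Pi.single_apply, hb]
  · simp

theorem sum_single_mul {k : ℕ} (α : Fin k) (c : Fin k → ℝ) :
    (∑ α' : Fin k, (Pi.single α (1 : ℝ) : Fin k → ℝ) α' * c α') = c α := by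
  rw [Finset.sum_eq_single α]
  · simp
  · intro b _ hb
    simp [Pi.single_apply, hb]
  · simp

theorem AOm_cons_P (H : Jb m N → ℝ) (q : Jb m N) (i : Fin m) (α : Fin N)
    (W : Fin m → Jb m N) (hW : ∀ b, (W b).1 = Pi.single b 1) :
    AOm m N H q (Fin.cons (PdirJ m N i α) W) =
      fderiv ℝ H q (PdirJ m N i α) - (W i).2.1 α := by
  rw [AOm_apply, val1 m N H q _ rfl W hW]
  congr 1
  have h : ∀ i' α', bdet (m + 2)
      (Fin.cons (cvec m i') fun j => L2 m N i' α'
        ((Fin.cons (PdirJ m N i α) W : Fin (m + 1) → Jb m N) j)) =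
      (Pi.single i (Pi.single α (1 : ℝ)) : Fin m → Fin N → ℝ) i' α' * (W i').2.1 α' :=
    fun i' α' => val2P m N i' α' _ rfl rfl W hW
  rw [Finset.sum_congr rfl fun i' _ => Finset.sum_congr rfl fun α' _ => h i' α']
  exact sum_single_single m N i α _

theorem AOm_cons_U (H : Jb m N → ℝ) (q : Jb m N) (α : Fin N)
    (W : Fin m → Jb m N) (hW : ∀ b, (W b).1 = Pi.single b 1) :
    AOm m N H q (Fin.cons (UdirJ m N α) W) =
      fderiv ℝ H q (UdirJ m N α) + ∑ i' : Fin m, (W i').2.2 i' α := by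
  rw [AOm_apply, val1 m N H q _ rfl W hW]
  have h : ∀ i' α', bdet (m + 2)
      (Fin.cons (cvec m i') fun j => L2 m N i' α'
        ((Fin.cons (UdirJ m N α) W : Fin (m + 1) → Jb m N) j)) =
      -((Pi.single α (1 : ℝ) : Fin N → ℝ) α' * (W i').2.2 i' α') :=
    fun i' α' => val2U m N i' α' _ rfl rfl W hW
  rw [Finset.sum_congr rfl fun i' _ => Finset.sum_congr rfl fun α' _ => h i' α']
  have h2 : ∀ i' : Fin m, (∑ α' : Fin N,
      -((Pi.single α (1 : ℝ) : Fin N → ℝ) α' * (W i').2.2 i' α')) = -((W i').2.2 i' α) := by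
    intro i'
    rw [Finset.sum_neg_distrib, sum_single_mul]
  rw [Finset.sum_congr rfl fun i' _ => h2 i', Finset.sum_neg_distrib, sub_neg_eq_add]

theorem vert_decomp (η : Jb m N) (h : η.1 = 0) :
    η = (∑ α : Fin N, η.2.1 α • UdirJ m N α) +
      ∑ i : Fin m, ∑ α : Fin N, η.2.2 i α • PdirJ m N i α := by
  refine Prod.ext ?_ (Prod.ext ?_ ?_)
  · simp [UdirJ, PdirJ, h, Prod.fst_sum]
  · funext β
    simp [UdirJ, PdirJ, Prod.snd_sum, Prod.fst_sum, Pi.single_apply, mul_ite]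
  · funext i β
    simp [UdirJ, PdirJ, Prod.snd_sum, Pi.single_apply, mul_ite]

theorem fderiv_secJ (φ : (Fin m → ℝ) → Fin N → ℝ) (hφ : ContDiff ℝ (⊤ : ℕ∞) φ)
    (P : (Fin m → ℝ) → Fin m → Fin N → ℝ) (hP : ContDiff ℝ (⊤ : ℕ∞) P)
    (x : Fin m → ℝ) (u : Fin m → ℝ) :
    fderiv ℝ (secJ m N φ P) x u = (u, fderiv ℝ φ x u, fderiv ℝ P x u) := by
  have h : HasFDerivAt (secJ m N φ P)
      ((ContinuousLinearMap.id ℝ (Fin m → ℝ)).prod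
        ((fderiv ℝ φ x).prod (fderiv ℝ P x))) x :=
    HasFDerivAt.prodMk (hasFDerivAt_id x)
      (HasFDerivAt.prodMk ((hφ.differentiable (by simp) x).hasFDerivAt)
        ((hP.differentiable (by simp) x).hasFDerivAt))
  rw [h.fderiv]
  rfl

theorem vanish_general (H : Jb m N → ℝ) (q : Jb m N) (L : (Fin m → ℝ) →ₗ[ℝ] Jb m N)
    (ξ0 : Jb m N)
    (h0 : AOm m N H q (Fin.cons ξ0 (fun a => L (Pi.single a 1))) = 0)
    (v : Fin m → Fin m → ℝ) :
    AOm m N H q (Fin.cons ξ0 (fun a => L (v a))) = 0 := by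
  classical
  set B : (Fin m → ℝ) [⋀^Fin m]→ₗ[ℝ] ℝ :=
    ((AOm m N H q).curryLeft ξ0).compLinearMap L with hB
  have hBv : ∀ v' : Fin m → Fin m → ℝ,
      B v' = AOm m N H q (Fin.cons ξ0 (fun a => L (v' a))) := by
    intro v'
    rw [hB, AlternatingMap.compLinearMap_apply, AlternatingMap.curryLeft_apply_apply]
    rfl
  have hBe : B ⇑(Pi.basisFun ℝ (Fin m)) = 0 := by
    rw [hBv]
    have heq : (fun a => L ((Pi.basisFun ℝ (Fin m)) a)) = fun a => L (Pi.single a 1) := by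
      funext a
      rw [Pi.basisFun_apply]
    rw [heq]
    exact h0
  have heq2 := AlternatingMap.eq_smul_basis_det (Pi.basisFun ℝ (Fin m)) B
  rw [← hBv, heq2, AlternatingMap.smul_apply, hBe]
  simp

end HDWaux

/-- Coordinate Hamilton–De Donder–Weyl theorem: a smooth section
`φ(x) = (xⁱ, φ^α(x), φⁱ_α(x))` of `J¹π* → ℝ^m` satisfies `φ*(ι_X Ω_h) = 0` for every
smooth vector field `X` on `J¹π*` if and only if it satisfies the HDW equations
`∂φ^α/∂xⁱ = (∂H/∂pⁱ_α)∘φ` and `∑ᵢ ∂φⁱ_α/∂xⁱ = −(∂H/∂u^α)∘φ`. -/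
theorem HDW_iff_pullback_contractions_vanish (m N : ℕ)
    (H : Jb m N → ℝ) (hH : ContDiff ℝ (⊤ : ℕ∞) H)
    (φ : (Fin m → ℝ) → Fin N → ℝ) (hφ : ContDiff ℝ (⊤ : ℕ∞) φ)
    (P : (Fin m → ℝ) → Fin m → Fin N → ℝ) (hP : ContDiff ℝ (⊤ : ℕ∞) P) :
    (∀ X : Jb m N → Jb m N, ContDiff ℝ (⊤ : ℕ∞) X →
      ∀ (x : Fin m → ℝ) (v : Fin m → Fin m → ℝ),
        pullC (secJ m N φ P) (iotaV X (OmegaH m N H)) x v = 0) ↔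
    HDWeq m N H φ P := by
  constructor
  · intro h
    constructor
    · intro x i α
      have h1 := h (fun _ => PdirJ m N i α) contDiff_const x (fun a => Pi.single a 1)
      simp only [pullC, iotaV] at h1
      rw [HDWaux.omega_eq] at h1
      have hW : ∀ b : Fin m,
          ((fun a => fderiv ℝ (secJ m N φ P) x (Pi.single a 1)) b).1 = Pi.single b 1 := by
        intro b
        show (fderiv ℝ (secJ m N φ P) x (Pi.single b 1)).1 = Pi.single b 1
        rw [HDWaux.fderiv_secJ m N φ hφ P hP]
      rw [HDWaux.AOm_cons_P m N H _ i α _ hW] at h1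
      simp only [HDWaux.fderiv_secJ m N φ hφ P hP] at h1
      linarith [h1]
    · intro x α
      have h1 := h (fun _ => UdirJ m N α) contDiff_const x (fun a => Pi.single a 1)
      simp only [pullC, iotaV] at h1
      rw [HDWaux.omega_eq] at h1
      have hW : ∀ b : Fin m,
          ((fun a => fderiv ℝ (secJ m N φ P) x (Pi.single a 1)) b).1 = Pi.single b 1 := by
        intro b
        show (fderiv ℝ (secJ m N φ P) x (Pi.single b 1)).1 = Pi.single b 1
        rw [HDWaux.fderiv_secJ m N φ hφ P hP]
      rw [HDWaux.AOm_cons_U m N H _ α _ hW] at h1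
      simp only [HDWaux.fderiv_secJ m N φ hφ P hP] at h1
      linarith [h1]
  · rintro ⟨h1, h2⟩ X hX x v
    simp only [pullC, iotaV]
    rw [HDWaux.omega_eq]
    set q := secJ m N φ P x with hq
    set L : (Fin m → ℝ) →ₗ[ℝ] Jb m N :=
      (fderiv ℝ (secJ m N φ P) x : (Fin m → ℝ) →ₗ[ℝ] Jb m N) with hLdef
    have hLap : ∀ u, L u = (u, fderiv ℝ φ x u, fderiv ℝ P x u) := by
      intro u
      rw [hLdef]
      exact HDWaux.fderiv_secJ m N φ hφ P hP x u
    have hbasisP : ∀ (i : Fin m) (α : Fin N),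
        HDWaux.AOm m N H q (Fin.cons (PdirJ m N i α) (fun a => L (Pi.single a 1))) = 0 := by
      intro i α
      rw [HDWaux.AOm_cons_P m N H q i α _ (fun b => by rw [hLap])]
      rw [hLap]
      simp [h1 x i α, hq]
    have hbasisU : ∀ α : Fin N,
        HDWaux.AOm m N H q (Fin.cons (UdirJ m N α) (fun a => L (Pi.single a 1))) = 0 := by
      intro α
      rw [HDWaux.AOm_cons_U m N H q α _ (fun b => by rw [hLap])]
      simp [hLap, h2 x α, hq]
    have hvP : ∀ (i : Fin m) (α : Fin N) (v' : Fin m → Fin m → ℝ),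
        HDWaux.AOm m N H q (Fin.cons (PdirJ m N i α) fun a => L (v' a)) = 0 :=
      fun i α v' => HDWaux.vanish_general m N H q L _ (hbasisP i α) v'
    have hvU : ∀ (α : Fin N) (v' : Fin m → Fin m → ℝ),
        HDWaux.AOm m N H q (Fin.cons (UdirJ m N α) fun a => L (v' a)) = 0 :=
      fun α v' => HDWaux.vanish_general m N H q L _ (hbasisU α) v'
    show HDWaux.AOm m N H q (Fin.cons (X q) fun a => L (v a)) = 0
    set ξ := X q with hξ
    have e0 : HDWaux.AOm m N H q (Fin.cons ξ fun a => L (v a)) =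
        ((HDWaux.AOm m N H q).curryLeft ξ) (fun a => L (v a)) :=
      (AlternatingMap.curryLeft_apply_apply _ _ _).symm
    rw [e0, show ξ = L ξ.1 + (ξ - L ξ.1) by abel, map_add, AlternatingMap.add_apply]
    have hpiece1 : ((HDWaux.AOm m N H q).curryLeft (L ξ.1)) (fun a => L (v a)) = 0 := by
      rw [AlternatingMap.curryLeft_apply_apply]
      have hfun : (Matrix.vecCons (L ξ.1) fun a => L (v a)) =
          fun j => L ((Fin.cons ξ.1 v : Fin (m + 1) → Fin m → ℝ) j) := by
        funext j
        refine Fin.cases ?_ (fun s => ?_) j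
        · rfl
        · rfl
      rw [hfun]
      have hnli : ¬ LinearIndependent ℝ (Fin.cons ξ.1 v : Fin (m + 1) → Fin m → ℝ) := by
        intro hli
        have hc := hli.fintype_card_le_finrank
        rw [Module.finrank_fin_fun] at hc
        simp at hc
      have hld := AlternatingMap.map_linearDependent
        ((HDWaux.AOm m N H q).compLinearMap L) (Fin.cons ξ.1 v) hnli
      rw [AlternatingMap.compLinearMap_apply] at hld
      exact hld
    have hvert : (ξ - L ξ.1).1 = 0 := by
      have := hLap ξ.1
      simp [this]
    have hpiece2 : ((HDWaux.AOm m N H q).curryLeft (ξ - L ξ.1)) (fun a => L (v a)) = 0 := by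
      rw [HDWaux.vert_decomp m N _ hvert, map_add, AlternatingMap.add_apply]
      have hs1 : (((HDWaux.AOm m N H q).curryLeft)
          (∑ α : Fin N, (ξ - L ξ.1).2.1 α • UdirJ m N α)) (fun a => L (v a)) = 0 := by
        rw [map_sum, HDWaux.alt_sum_apply]
        refine Finset.sum_eq_zero fun α _ => ?_
        rw [map_smul, AlternatingMap.smul_apply]
        have : ((HDWaux.AOm m N H q).curryLeft (UdirJ m N α)) (fun a => L (v a)) = 0 := by
          rw [AlternatingMap.curryLeft_apply_apply]
          exact hvU α v
        rw [this]
        simp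
      have hs2 : (((HDWaux.AOm m N H q).curryLeft)
          (∑ i : Fin m, ∑ α : Fin N, (ξ - L ξ.1).2.2 i α • PdirJ m N i α))
          (fun a => L (v a)) = 0 := by
        rw [map_sum, HDWaux.alt_sum_apply]
        refine Finset.sum_eq_zero fun i _ => ?_
        rw [map_sum, HDWaux.alt_sum_apply]
        refine Finset.sum_eq_zero fun α _ => ?_
        rw [map_smul, AlternatingMap.smul_apply]
        have : ((HDWaux.AOm m N H q).curryLeft (PdirJ m N i α)) (fun a => L (v a)) = 0 := by
          rw [AlternatingMap.curryLeft_apply_apply]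
          exact hvP i α v
        rw [this]
        simp
      rw [hs1, hs2]
      ring
    rw [hpiece1, hpiece2]
    ring
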